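/- The border rank of W is 2: W lies in the closure of the set of tensors of rank at most 2 in ℂ²⊗ℂ²⊗ℂ², but W itself has rank 3, hence border rank strictly less than rank. -/

import Mathlib

open scoped BigOperators

/-- A 3-tensor in `ℂ^a ⊗ ℂ^b ⊗ ℂ^c`, given by its coordinates. -/
abbrev T3 (a b c : ℕ) : Type := Fin a → Fin b → Fin c → ℂ

/-- Restriction of 3-tensors: `t ≥ t'` iff `t' = (m₁ ⊗ m₂ ⊗ m₃) t`. -/
def res3 {a b c a' b' c' : ℕ} (t : T3 a b c) (t' : T3 a' b' c') : Prop :=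
  ∃ (m₁ : Fin a' → Fin a → ℂ) (m₂ : Fin b' → Fin b → ℂ) (m₃ : Fin c' → Fin c → ℂ),
    ∀ i j k, t' i j k = ∑ p, ∑ q, ∑ r, m₁ i p * m₂ j q * m₃ k r * t p q r

/-- The W-state `e₀⊗e₀⊗e₁ + e₀⊗e₁⊗e₀ + e₁⊗e₀⊗e₀`. -/
def W : T3 2 2 2 := fun i j k => if (i : ℕ) + (j : ℕ) + (k : ℕ) = 1 then 1 else 0

/-- The GHZ state `e₀⊗e₀⊗e₀ + e₁⊗e₁⊗e₁`. -/
def GHZ2 : T3 2 2 2 := fun i j k => if i = j ∧ j = k then 1 else 0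

/-- The unit tensor `GHZ_r = Σ_i e_i⊗e_i⊗e_i`. -/
def GHZ (r : ℕ) : T3 r r r := fun i j k => if i = j ∧ j = k then 1 else 0

/-- The set of 3-tensors in `ℂ²⊗ℂ²⊗ℂ²` of tensor rank at most `r`:
sums of `r` simple tensors. -/
def RankLE (r : ℕ) : Set (T3 2 2 2) :=
  {t | ∃ a b c : Fin r → Fin 2 → ℂ,
    ∀ i j k, t i j k = ∑ l, a l i * b l j * c l k}

/-- the border rank of W is 2: W lies in the closure of the rank-≤2
tensors, is not itself of rank ≤ 2, but has rank ≤ 3 (hence rank 3 and border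
rank strictly below rank). -/
theorem borderRank_W :
    W ∈ closure (RankLE 2) ∧ W ∉ RankLE 2 ∧ W ∈ RankLE 3 := by
  refine ⟨?_, ?_, ?_⟩
  · -- W is in the closure of rank ≤ 2 tensors
    set f : ℂ → (Fin 2 → Fin 2 → Fin 2 → ℂ) := fun ε i j k =>
      if (i:ℕ)+(j:ℕ)+(k:ℕ) = 0 then 0 else ε^((i:ℕ)+(j:ℕ)+(k:ℕ)-1) with hfdef
    have hf0 : f 0 = W := by
      funext i j k
      fin_cases i <;> fin_cases j <;> fin_cases k <;> norm_num [hfdef, W]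
    have hcont : Continuous f := by
      apply continuous_pi; intro i; apply continuous_pi; intro j; apply continuous_pi; intro k
      by_cases h : (i:ℕ)+(j:ℕ)+(k:ℕ) = 0
      · simp only [hfdef, if_pos h]; exact continuous_const
      · simp only [hfdef, if_neg h]; exact continuous_pow _
    have hmem : ∀ ε ∈ ({(0:ℂ)}ᶜ : Set ℂ), f ε ∈ RankLE 2 := by
      intro ε hε
      have hε' : ε ≠ 0 := hε
      refine ⟨![![1, ε], ![1, 0]], ![![1, ε], ![1, 0]], ![![ε⁻¹, 1], ![-ε⁻¹, 0]], ?_⟩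
      intro i j k
      fin_cases i <;> fin_cases j <;> fin_cases k <;>
        · try simp [hfdef, Fin.sum_univ_two, Matrix.vecHead, Matrix.vecTail]
          try field_simp
          try ring
    have htend : Filter.Tendsto f (nhdsWithin 0 {(0:ℂ)}ᶜ) (nhds W) := by
      rw [← hf0]
      exact (hcont.tendsto 0).mono_left nhdsWithin_le_nhds
    exact mem_closure_of_tendsto htend (Filter.eventually_of_mem self_mem_nhdsWithin hmem)
  · -- W does not have rank ≤ 2
    rintro ⟨a, b, c, h⟩
    have e000 := h 0 0 0
    have e010 := h 0 1 0
    have e100 := h 1 0 0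
    have e110 := h 1 1 0
    have e001 := h 0 0 1
    have e011 := h 0 1 1
    have e101 := h 1 0 1
    have e111 := h 1 1 1
    simp [W, Fin.sum_univ_two] at e000 e010 e100 e110 e001 e011 e101 e111
    have key0 : c 0 0 * c 1 0 * ((a 0 0 * a 1 1 - a 0 1 * a 1 0) * (b 0 0 * b 1 1 - b 0 1 * b 1 0)) = -1 := by
      linear_combination (-(a 0 1 * b 0 1 * c 0 0 + a 1 1 * b 1 1 * c 1 0)) * e000
        + (a 0 1 * b 0 0 * c 0 0 + a 1 1 * b 1 0 * c 1 0) * e010 + e100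
    have key1 : (c 0 1 * c 1 1) * ((a 0 0 * a 1 1 - a 0 1 * a 1 0) * (b 0 0 * b 1 1 - b 0 1 * b 1 0)) = 0 := by
      linear_combination (-(a 0 1 * b 0 1 * c 0 1 + a 1 1 * b 1 1 * c 1 1)) * e001
        + (a 0 1 * b 0 0 * c 0 1 + a 1 1 * b 1 0 * c 1 1) * e011 - e111
    have hne : c 0 0 * c 1 0 * ((a 0 0 * a 1 1 - a 0 1 * a 1 0) * (b 0 0 * b 1 1 - b 0 1 * b 1 0)) ≠ 0 := by
      rw [key0]; norm_num
    have hα := left_ne_zero_of_mul (left_ne_zero_of_mul hne)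
    have hγ := right_ne_zero_of_mul (left_ne_zero_of_mul hne)
    have hD12 := right_ne_zero_of_mul hne
    have hD1 := left_ne_zero_of_mul hD12
    have hD2 := right_ne_zero_of_mul hD12
    have hβδ : c 0 1 * c 1 1 = 0 := by
      rcases mul_eq_zero.mp key1 with h1 | h1
      · exact h1
      · exact absurd h1 hD12
    rcases mul_eq_zero.mp hβδ with hβ | hδ
    · rw [hβ] at e001 e011 e101
      simp only [mul_zero, zero_mul, zero_add, add_zero] at e001 e011 e101
      have hr : a 1 0 ≠ 0 := by intro h0; rw [h0] at e001; norm_num at e001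
      have hw : b 1 0 ≠ 0 := by intro h0; rw [h0] at e001; norm_num at e001
      have hδ' : c 1 1 ≠ 0 := by intro h0; rw [h0] at e001; norm_num at e001
      have hx : b 1 1 = 0 := by
        have h1 := e011.symm
        simpa [mul_eq_zero, hr, hδ'] using h1
      have hs : a 1 1 = 0 := by
        have h1 := e101.symm
        simpa [mul_eq_zero, hw, hδ'] using h1
      have hq : a 0 1 ≠ 0 := by intro h0; apply hD1; rw [hs, h0]; ring
      have hv : b 0 1 ≠ 0 := by intro h0; apply hD2; rw [hx, h0]; ring
      have h1 := e110.symm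
      rw [hs, hx] at h1
      simp [mul_eq_zero, hq, hv, hα] at h1
    · rw [hδ] at e001 e011 e101
      simp only [mul_zero, zero_mul, zero_add, add_zero] at e001 e011 e101
      have hp : a 0 0 ≠ 0 := by intro h0; rw [h0] at e001; norm_num at e001
      have hu : b 0 0 ≠ 0 := by intro h0; rw [h0] at e001; norm_num at e001
      have hβ' : c 0 1 ≠ 0 := by intro h0; rw [h0] at e001; norm_num at e001
      have hv : b 0 1 = 0 := by
        have h1 := e011.symm
        simpa [mul_eq_zero, hp, hβ'] using h1
      have hq : a 0 1 = 0 := by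
        have h1 := e101.symm
        simpa [mul_eq_zero, hu, hβ'] using h1
      have hs : a 1 1 ≠ 0 := by intro h0; apply hD1; rw [hq, h0]; ring
      have hx : b 1 1 ≠ 0 := by intro h0; apply hD2; rw [hv, h0]; ring
      have h1 := e110.symm
      rw [hq, hv] at h1
      simp [mul_eq_zero, hs, hx, hγ] at h1
  · -- W has rank ≤ 3
    refine ⟨![![1,0],![1,0],![0,1]], ![![1,0],![0,1],![1,0]], ![![0,1],![1,0],![1,0]], ?_⟩
    intro i j k
    fin_cases i <;> fin_cases j <;> fin_cases k <;>
      norm_num [W, Fin.sum_univ_three, Matrix.vecHead, Matrix.vecTail, Matrix.cons_val_two]
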